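/- The full shift ({0,1}^ω, σ) exhibits dense ω-chaos: every nonempty open subset of {0,1}^ω contains an uncountable ω-scrambled set. -/

import Mathlib

/-- The shift map on binary sequences. -/
def shiftMap (x : ℕ → Bool) : ℕ → Bool := fun n => x (n + 1)

/-- The ω-limit set of a binary sequence under the shift, in the product topology. -/
def omegaLimitShift (x : ℕ → Bool) : Set (ℕ → Bool) :=
  ⋂ n : ℕ, closure { y | ∃ i : ℕ, n ≤ i ∧ shiftMap^[i] x = y }

/-- A set is ω-scrambled for the shift. -/
def OmegaScrambled (A : Set (ℕ → Bool)) : Prop :=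
  ∀ x ∈ A, ∀ y ∈ A, x ≠ y →
    (omegaLimitShift x ∩ omegaLimitShift y).Nonempty ∧
    ¬ (omegaLimitShift x \ omegaLimitShift y).Countable ∧
    ∃ p ∈ omegaLimitShift x, ¬ ∃ m : ℕ, 1 ≤ m ∧ shiftMap^[m] p = p

namespace OmegaChaos

def occursAt (u : List Bool) (x : ℕ → Bool) (i : ℕ) : Prop :=
  ∀ j < u.length, x (i + j) = u.getD j false

def Recurs (x : ℕ → Bool) (u : List Bool) : Prop :=
  ∀ n : ℕ, ∃ i, n ≤ i ∧ occursAt u x i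

lemma getD_replicate {n i : ℕ} (h : i < n) (b d : Bool) :
    (List.replicate n b).getD i d = b := by
  simp [List.getD_eq_getElem?_getD, List.getElem?_replicate, h]

lemma getD_prefix {l₁ l₂ : List Bool} (h : l₁ <+: l₂) {i : ℕ} (hi : i < l₁.length) (d : Bool) :
    l₂.getD i d = l₁.getD i d := by
  obtain ⟨r, rfl⟩ := h
  rw [List.getD_append _ _ _ _ hi]

lemma shift_iter (x : ℕ → Bool) (i : ℕ) : shiftMap^[i] x = fun j => x (j + i) := by
  induction i with
  | zero => rfl
  | succ n ih =>
      funext j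
      rw [Function.iterate_succ_apply', ih]
      show x (j + 1 + n) = x (j + (n + 1))
      exact congrArg x (by omega)

lemma cylinder_isOpen (y : ℕ → Bool) (m : ℕ) : IsOpen {z : ℕ → Bool | ∀ j < m, z j = y j} := by
  have h : {z : ℕ → Bool | ∀ j < m, z j = y j} = ⋂ j : Fin m, (fun z : ℕ → Bool => z j) ⁻¹' {y j} := by
    ext z
    simp only [Set.mem_iInter, Set.mem_preimage, Set.mem_singleton_iff, Set.mem_setOf_eq]
    exact ⟨fun h j => h j j.2, fun h j hj => h ⟨j, hj⟩⟩
  rw [h]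
  exact isOpen_iInter_of_finite fun j =>
    (isOpen_discrete _).preimage (continuous_apply (j : ℕ))

lemma exists_cylinder_subset {y : ℕ → Bool} {t : Set (ℕ → Bool)} (ht : t ∈ nhds y) :
    ∃ m, {z : ℕ → Bool | ∀ j < m, z j = y j} ⊆ t := by
  rw [nhds_pi, Filter.mem_pi] at ht
  obtain ⟨I, hIfin, f, hf, hsub⟩ := ht
  obtain ⟨m, hm⟩ : ∃ m, ∀ i ∈ I, i < m := by
    rcases hIfin.bddAbove with ⟨b, hb⟩
    exact ⟨b + 1, fun i hi => Nat.lt_succ_of_le (hb hi)⟩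
  refine ⟨m, fun z hz => hsub ?_⟩
  intro i hi
  have hz' : z i = y i := hz i (hm i hi)
  rw [hz']
  have := hf i
  rwa [nhds_discrete, Filter.mem_pure] at this

lemma mem_omega_iff {x y : ℕ → Bool} :
    y ∈ omegaLimitShift x ↔ ∀ m n : ℕ, ∃ i, n ≤ i ∧ ∀ j < m, x (i + j) = y j := by
  constructor
  · intro hy m n
    have hy' := Set.mem_iInter.1 hy n
    have h2 := (mem_closure_iff).1 hy' _ (cylinder_isOpen y m) (fun j _ => rfl)
    obtain ⟨z, hz1, i, hi, rfl⟩ := h2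
    refine ⟨i, hi, fun j hj => ?_⟩
    have := hz1 j hj
    rw [shift_iter] at this
    simpa [Nat.add_comm] using this
  · intro h
    refine Set.mem_iInter.2 fun n => ?_
    rw [mem_closure_iff_nhds]
    intro t ht
    obtain ⟨m, hm⟩ := exists_cylinder_subset ht
    obtain ⟨i, hi, hocc⟩ := h m n
    refine ⟨shiftMap^[i] x, hm ?_, ⟨i, hi, rfl⟩⟩
    intro j hj
    rw [shift_iter]
    simpa [Nat.add_comm] using hocc j hj

lemma mem_omega_of_forall_recurs {x y : ℕ → Bool}
    (h : ∀ m, ∃ u : List Bool, m ≤ u.length ∧ (∀ j < m, u.getD j false = y j) ∧ Recurs x u) :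
    y ∈ omegaLimitShift x := by
  rw [mem_omega_iff]
  intro m n
  obtain ⟨u, hlen, hval, hrec⟩ := h m
  obtain ⟨i, hi, hocc⟩ := hrec n
  exact ⟨i, hi, fun j hj => by rw [hocc j (lt_of_lt_of_le hj hlen), hval j hj]⟩


def rep (c : ℕ) : List Bool := List.replicate c true
def gapL (b : Bool) : List Bool := List.replicate (if b then 2 else 1) false
def cval (s : ℕ → Bool) (k : ℕ) : ℕ := Encodable.encode (k, (List.range (k+1)).map s) + 4
def FMw (c : ℕ) (g : List Bool) : List Bool := g.flatMap (fun b => rep c ++ gapL b)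
def core (c : ℕ) (g : List Bool) : List Bool := FMw c g ++ rep c
def glist (a : ℕ → Bool) (n : ℕ) : List Bool := (List.range n).map a
def trip (n : ℕ) : ℕ × ℕ × ℕ := Denumerable.ofNat (ℕ × ℕ × ℕ) n
def gdec (m : ℕ) : List Bool := ((Encodable.decode (α := List Bool) m).getD [])
def piece (s : ℕ → Bool) (n : ℕ) : List Bool :=
  false :: (core (cval s (trip n).2.1) (gdec (trip n).2.2) ++ List.replicate (n+3) false)
def preL (s : ℕ → Bool) (n : ℕ) : List Bool := (List.range n).flatMap (piece s)
def XX (s : ℕ → Bool) : ℕ → Bool := fun j => (preL s (j+1)).getD j false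
def startPos (s : ℕ → Bool) (n : ℕ) : ℕ := (preL s n).length

lemma cval_ge (s : ℕ → Bool) (k : ℕ) : 4 ≤ cval s k := by simp [cval]

lemma cval_inj {s t : ℕ → Bool} {k j : ℕ} (h : cval s k = cval t j) :
    k = j ∧ ∀ i ≤ k, s i = t i := by
  have h' : ((k, (List.range (k+1)).map s) : ℕ × List Bool)
      = (j, (List.range (j+1)).map t) := by
    apply Encodable.encode_injective
    have h2 : Encodable.encode ((k, (List.range (k+1)).map s) : ℕ × List Bool) + 4
        = Encodable.encode ((j, (List.range (j+1)).map t) : ℕ × List Bool) + 4 := h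
    omega
  have hkj : k = j := congrArg Prod.fst h'
  have hmap := congrArg Prod.snd h'
  simp only at hkj hmap
  subst hkj
  refine ⟨rfl, fun i hi => ?_⟩
  have hlen : i < ((List.range (k+1)).map s).length := by
    simpa using Nat.lt_succ_of_le hi
  have hlen' : i < ((List.range (k+1)).map t).length := by
    simpa using Nat.lt_succ_of_le hi
  have h3 : ((List.range (k+1)).map s).getD i false = ((List.range (k+1)).map t).getD i false :=
    congrArg (fun l : List Bool => l.getD i false) hmap
  rw [List.getD_eq_getElem _ _ hlen, List.getD_eq_getElem _ _ hlen'] at h3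
  simpa [List.getElem_map, List.getElem_range] using h3

lemma piece_pos (s : ℕ → Bool) (n : ℕ) : 0 < (piece s n).length := by simp [piece]

lemma preL_succ (s : ℕ → Bool) (n : ℕ) : preL s (n+1) = preL s n ++ piece s n := by
  rw [preL, List.range_succ, List.flatMap_append]
  simp [preL]

lemma preL_prefix (s : ℕ → Bool) {m n : ℕ} (h : m ≤ n) : preL s m <+: preL s n := by
  induction n, h using Nat.le_induction with
  | base => exact List.prefix_refl _
  | succ n hmn ih => rw [preL_succ]; exact ih.trans (List.prefix_append _ _)

lemma startPos_ge (s : ℕ → Bool) (n : ℕ) : n ≤ startPos s n := by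
  induction n with
  | zero => exact Nat.zero_le _
  | succ n ih =>
      have := piece_pos s n
      have h2 : startPos s (n+1) = startPos s n + (piece s n).length := by
        simp [startPos, preL_succ]
      omega

lemma X_eq (s : ℕ → Bool) {N j : ℕ} (h : j < (preL s N).length) :
    XX s j = (preL s N).getD j false := by
  have hj : j < (preL s (j+1)).length := by
    have := startPos_ge s (j+1); simp only [startPos] at this; omega
  rcases le_total (j+1) N with hc | hc
  · rw [XX, getD_prefix (preL_prefix s hc) hj]
  · rw [XX, getD_prefix (preL_prefix s hc) h]

lemma occursAt_piece (s : ℕ → Bool) (n : ℕ) : occursAt (piece s n) (XX s) (startPos s n) := by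
  intro j hj
  have hlt : startPos s n + j < (preL s (n+1)).length := by
    rw [preL_succ]; simp only [List.length_append]; simp only [startPos] at *; omega
  have hle : (preL s n).length ≤ startPos s n + j := by simp [startPos]
  rw [X_eq s hlt, preL_succ, List.getD_append_right _ _ _ _ hle]
  congr 1
  simp [startPos]

lemma occursAt_left {u v : List Bool} {x : ℕ → Bool} {i : ℕ} (h : occursAt (u ++ v) x i) :
    occursAt u x i := by
  intro j hj
  rw [h j (by simp; omega), List.getD_append _ _ _ _ hj]

lemma occursAt_right {u v : List Bool} {x : ℕ → Bool} {i : ℕ} (h : occursAt (u ++ v) x i) :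
    occursAt v x (i + u.length) := by
  intro j hj
  have := h (u.length + j) (by simp; omega)
  rw [List.getD_append_right _ _ _ _ (Nat.le_add_right _ _)] at this
  simpa [Nat.add_assoc] using this

lemma occursAt_prefix {u v : List Bool} {x : ℕ → Bool} {i : ℕ} (h : occursAt u x i)
    (hp : v <+: u) : occursAt v x i := by
  intro j hj
  rw [h j (lt_of_lt_of_le hj hp.length_le), getD_prefix hp hj]

lemma X_startPos_false (s : ℕ → Bool) (n : ℕ) : XX s (startPos s n) = false := by
  have := occursAt_piece s n 0 (piece_pos s n)
  simpa [piece] using this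

lemma exists_piece_index (k : ℕ) (g : List Bool) (N : ℕ) :
    ∃ n, N ≤ n ∧ (trip n).2.1 = k ∧ gdec ((trip n).2.2) = g := by
  set f : ℕ → ℕ := fun M => Encodable.encode ((M, k, Encodable.encode g) : ℕ × ℕ × ℕ) with hf
  have hinj : Function.Injective f := by
    intro a b hab
    have h2 := Encodable.encode_injective hab
    exact congrArg Prod.fst h2
  obtain ⟨b, hb, hNb⟩ := (Set.infinite_range_of_injective hinj).exists_gt N
  obtain ⟨M, rfl⟩ := hb
  refine ⟨f M, le_of_lt hNb, ?_, ?_⟩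
  · simp [hf, trip, Denumerable.ofNat_encode]
  · simp [hf, trip, Denumerable.ofNat_encode, gdec, Encodable.encodek]

def RunP (c : ℕ) (l : List Bool) : Prop :=
  ∀ p m, 1 ≤ m → p + m ≤ l.length →
    (p = 0 ∨ l.getD (p-1) false = false) →
    (∀ j < m, l.getD (p+j) false = true) →
    (p + m = l.length ∨ l.getD (p+m) false = false) → m = c

lemma getD_replicate' {n i : ℕ} (h : i < n) (b d : Bool) :
    (List.replicate n b).getD i d = b := by
  simp [List.getD_eq_getElem?_getD, List.getElem?_replicate, h]

lemma runP_nil (c : ℕ) : RunP c [] := by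
  intro p m h1 h2 _ _ _
  simp at h2
  omega

lemma runP_cons_false {c : ℕ} {l : List Bool} (h : RunP c l) : RunP c (false :: l) := by
  intro p m h1 h2 hleft hrun hright
  have hp : p ≠ 0 := by
    intro h0
    have := hrun 0 h1
    rw [h0] at this
    simp at this
  obtain ⟨q, rfl⟩ : ∃ q, p = q + 1 := ⟨p - 1, by omega⟩
  apply h q m h1
  · simp at h2; omega
  · rcases Nat.eq_zero_or_pos q with hq | hq
    · left; exact hq
    · right
      rcases hleft with h' | h'
      · omega
      · obtain ⟨r, rfl⟩ : ∃ r, q = r + 1 := ⟨q - 1, by omega⟩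
        rw [show r + 1 + 1 - 1 = r + 1 by omega, List.getD_cons_succ] at h'
        rwa [show r + 1 - 1 = r by omega]
  · intro j hj
    have := hrun j hj
    rwa [show q + 1 + j = (q + j) + 1 by omega, List.getD_cons_succ] at this
  · rcases hright with h' | h'
    · left; simp at h'; omega
    · right
      rwa [show q + 1 + m = (q + m) + 1 by omega, List.getD_cons_succ] at h'

lemma runP_zeros_append {c : ℕ} {l : List Bool} (a : ℕ) (h : RunP c l) :
    RunP c (List.replicate a false ++ l) := by
  induction a with
  | zero => simpa
  | succ a ih =>
      have : List.replicate (a+1) false ++ l = false :: (List.replicate a false ++ l) := by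
        simp [List.replicate_succ]
      rw [this]
      exact runP_cons_false ih

lemma runP_zeros (c a : ℕ) : RunP c (List.replicate a false) := by
  simpa using runP_zeros_append a (runP_nil c)

lemma rep_length (c : ℕ) : (rep c).length = c := by simp [rep]

lemma runP_rep_append {c : ℕ} {l : List Bool} (hc : 1 ≤ c) (h : RunP c l)
    (hhead : l.getD 0 false = false) (hne : l ≠ []) : RunP c (rep c ++ l) := by
  have hl1 : 1 ≤ l.length := List.length_pos_iff.2 hne
  intro p m h1 h2 hleft hrun hright
  rw [List.length_append, rep_length] at h2
  rcases Nat.lt_or_ge p c with cp | cp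
  · -- p = 0, m = c
    have hp0 : p = 0 := by
      rcases hleft with h' | h'
      · exact h'
      · exfalso
        rw [List.getD_append _ _ _ _ (by rw [rep_length]; omega)] at h'
        rw [rep, getD_replicate' (by omega)] at h'
        simp at h'
    subst hp0
    have hmc : ¬ m < c := by
      intro hmlt
      rcases hright with h' | h'
      · rw [List.length_append, rep_length] at h'; omega
      · rw [List.getD_append _ _ _ _ (by rw [rep_length]; omega)] at h'
        rw [rep, getD_replicate' (by omega)] at h'
        simp at h'
    have hcm : ¬ c < m := by
      intro hclt
      have := hrun c hclt
      rw [List.getD_append_right _ _ _ _ (by rw [rep_length]; omega)] at this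
      rw [rep_length, show 0 + c - c = 0 by omega, hhead] at this
      simp at this
    omega
  · -- shift into l
    apply h (p - c) m h1
    · omega
    · rcases Nat.eq_or_lt_of_le cp with hq | hq
      · left; omega
      · right
        rcases hleft with h' | h'
        · omega
        · rw [List.getD_append_right _ _ _ _ (by rw [rep_length]; omega)] at h'
          rwa [show p - 1 - (rep c).length = p - c - 1 by rw [rep_length]; omega] at h'
    · intro j hj
      have := hrun j hj
      rw [List.getD_append_right _ _ _ _ (by rw [rep_length]; omega)] at this
      rwa [show p + j - (rep c).length = p - c + j by rw [rep_length]; omega] at this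
    · rcases hright with h' | h'
      · left; rw [List.length_append, rep_length] at h'; omega
      · right
        rw [List.getD_append_right _ _ _ _ (by rw [rep_length]; omega)] at h'
        rwa [show p + m - (rep c).length = p - c + m by rw [rep_length]; omega] at h'

lemma gapL_length_pos (b : Bool) : 0 < (gapL b).length := by
  cases b <;> simp [gapL]

lemma runP_core_append {c : ℕ} (hc : 1 ≤ c) (g : List Bool) {l : List Bool} (h : RunP c l)
    (hhead : l.getD 0 false = false) (hne : l ≠ []) :
    RunP c (core c g ++ l) ∧ (core c g ++ l).getD 0 false = true := by
  induction g with
  | nil =>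
      have he : core c [] ++ l = rep c ++ l := by simp [core, FMw]
      rw [he]
      constructor
      · exact runP_rep_append hc h hhead hne
      · rw [List.getD_append _ _ _ _ (by rw [rep_length]; omega)]
        rw [rep, getD_replicate' (by omega)]
  | cons b g' ih =>
      obtain ⟨ih1, ih2⟩ := ih
      have he : core c (b :: g') ++ l = rep c ++ (gapL b ++ (core c g' ++ l)) := by
        simp [core, FMw, List.append_assoc]
      rw [he]
      have hzp : RunP c (gapL b ++ (core c g' ++ l)) := by
        have : gapL b = List.replicate (if b then 2 else 1) false := rfl
        rw [this]
        exact runP_zeros_append _ ih1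
      have hzh : (gapL b ++ (core c g' ++ l)).getD 0 false = false := by
        rw [List.getD_append _ _ _ _ (gapL_length_pos b)]
        cases b <;> simp [gapL]
      have hzn : gapL b ++ (core c g' ++ l) ≠ [] := by
        intro hcon
        have := congrArg List.length hcon
        simp at this
        exact absurd this.1 (by cases b <;> simp [gapL])
      constructor
      · exact runP_rep_append hc hzp hzh hzn
      · rw [List.getD_append _ _ _ _ (by rw [rep_length]; omega)]
        rw [rep, getD_replicate' (by omega)]

lemma runP_piece (s : ℕ → Bool) (n : ℕ) : RunP (cval s (trip n).2.1) (piece s n) := by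
  have hc : 1 ≤ cval s (trip n).2.1 := le_trans (by norm_num) (cval_ge s _)
  have h := (runP_core_append hc (gdec (trip n).2.2)
      (l := List.replicate (n+3) false) (runP_zeros _ _)
      (by rw [getD_replicate' (by omega)]) (by simp)).1
  exact runP_cons_false h

lemma exists_block (s : ℕ → Bool) (v : ℕ) :
    ∃ n, startPos s n ≤ v ∧ v + 1 ≤ startPos s (n+1) := by
  classical
  set P : ℕ → Prop := fun q => startPos s q ≤ v with hP
  have hP0 : P 0 := by simp [hP, startPos, preL]
  set n := Nat.findGreatest P (v+1) with hn
  have hspec : P n := Nat.findGreatest_spec (Nat.zero_le _) hP0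
  have hnv : n ≤ v := le_trans (startPos_ge s n) hspec
  have hgr : ¬ P (n+1) := Nat.findGreatest_is_greatest (n := v+1) (by omega) (by omega)
  exact ⟨n, hspec, by simpa [hP] using hgr⟩

lemma no_bad_run (t : ℕ → Bool) (m : ℕ) (hm : 1 ≤ m) (h : ∀ k, m ≠ cval t k) (i : ℕ) :
    ¬ (XX t i = false ∧ (∀ j < m, XX t (i+1+j) = true) ∧ XX t (i+1+m) = false) := by
  rintro ⟨h0, hrun, hend⟩
  obtain ⟨n, hn1, hn2⟩ := exists_block t (i+1)
  have hlen : startPos t (n+1) = startPos t n + (piece t n).length := by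
    simp [startPos, preL_succ]
  have hocc := occursAt_piece t n
  have hcont : i + 1 + m ≤ startPos t (n+1) := by
    by_contra hcon
    push_neg at hcon
    have hj : startPos t (n+1) - (i+1) < m := by omega
    have hx := hrun _ hj
    rw [show i+1+(startPos t (n+1) - (i+1)) = startPos t (n+1) by omega] at hx
    rw [X_startPos_false] at hx
    simp at hx
  set p := i + 1 - startPos t n with hp
  apply h (trip n).2.1
  apply runP_piece t n p m hm
  · omega
  · rcases Nat.eq_zero_or_pos p with hp0 | hp0
    · left; exact hp0
    · right
      have hlt : p - 1 < (piece t n).length := by omega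
      rw [← hocc _ hlt, show startPos t n + (p-1) = i by omega]
      exact h0
  · intro j hj
    have hlt : p + j < (piece t n).length := by omega
    rw [← hocc _ hlt, show startPos t n + (p+j) = i+1+j by omega]
    exact hrun j hj
  · rcases Nat.lt_or_ge (p + m) (piece t n).length with hlt | hge
    · right
      rw [← hocc _ hlt, show startPos t n + (p+m) = i+1+m by omega]
      exact hend
    · left; omega

/-! ### The scrambled points -/

def base (c : ℕ) (a : ℕ → Bool) (r : ℕ) : ℕ := (FMw c (glist a r)).length

def zpt (c : ℕ) (a : ℕ → Bool) : ℕ → Bool := fun j => (core c (glist a (j+1))).getD j false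

lemma glist_zero (a : ℕ → Bool) : glist a 0 = [] := by simp [glist]

lemma glist_succ (a : ℕ → Bool) (n : ℕ) : glist a (n+1) = glist a n ++ [a n] := by
  simp [glist, List.range_succ]

lemma FMw_append (c : ℕ) (g₁ g₂ : List Bool) : FMw c (g₁ ++ g₂) = FMw c g₁ ++ FMw c g₂ := by
  simp [FMw, List.flatMap_append]

lemma FMw_single (c : ℕ) (b : Bool) : FMw c [b] = rep c ++ gapL b := by
  simp [FMw]

lemma gapL_len (b : Bool) : (gapL b).length = if b then 2 else 1 := by
  cases b <;> simp [gapL]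

lemma core_len (c : ℕ) (g : List Bool) : (core c g).length = (FMw c g).length + c := by
  simp [core, rep]

lemma base_zero (c : ℕ) (a : ℕ → Bool) : base c a 0 = 0 := by
  simp [base, glist_zero, FMw]

lemma base_succ (c : ℕ) (a : ℕ → Bool) (r : ℕ) :
    base c a (r+1) = base c a r + c + (if a r then 2 else 1) := by
  simp [base, glist_succ, FMw_append, FMw_single, rep, gapL_len]
  omega

lemma base_ge (c : ℕ) (a : ℕ → Bool) (r : ℕ) : r ≤ base c a r := by
  induction r with
  | zero => simp [base_zero]
  | succ r ih => rw [base_succ]; cases a r <;> simp <;> omega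

lemma core_glist_mono (c : ℕ) (a : ℕ → Bool) {n m : ℕ} (h : n ≤ m) :
    core c (glist a n) <+: core c (glist a m) := by
  induction m, h using Nat.le_induction with
  | base => exact List.prefix_refl _
  | succ m hnm ih =>
      refine ih.trans ⟨gapL (a m) ++ rep c, ?_⟩
      simp [core, glist_succ, FMw_append, FMw_single, List.append_assoc]

lemma zpt_eq (c : ℕ) (a : ℕ → Bool) {n j : ℕ} (h : j < (core c (glist a n)).length) :
    zpt c a j = (core c (glist a n)).getD j false := by
  have hj : j < (core c (glist a (j+1))).length := by
    have h1 := base_ge c a (j+1)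
    rw [core_len]
    have : base c a (j+1) = (FMw c (glist a (j+1))).length := rfl
    omega
  rcases le_total (j+1) n with hc | hc
  · rw [zpt, getD_prefix (core_glist_mono c a hc) hj]
  · rw [zpt, getD_prefix (core_glist_mono c a hc) h]

lemma core_split (c : ℕ) (a : ℕ → Bool) (r : ℕ) :
    core c (glist a (r+1)) = FMw c (glist a r) ++ (rep c ++ (gapL (a r) ++ rep c)) := by
  simp [core, glist_succ, FMw_append, FMw_single, List.append_assoc]

lemma zpt_true (c : ℕ) (a : ℕ → Bool) (r : ℕ) {j : ℕ} (hj : j < c) :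
    zpt c a (base c a r + j) = true := by
  have hlen : base c a r + j < (core c (glist a (r+1))).length := by
    have := base_succ c a r
    rw [core_len]
    have hb : base c a (r+1) = (FMw c (glist a (r+1))).length := rfl
    cases h : a r <;> simp [h] at this <;> omega
  rw [zpt_eq c a hlen, core_split]
  rw [List.getD_append_right _ _ _ _ (by rw [show (FMw c (glist a r)).length = base c a r from rfl]; omega)]
  rw [show base c a r + j - (FMw c (glist a r)).length = j from by
    rw [show (FMw c (glist a r)).length = base c a r from rfl]; omega]
  rw [List.getD_append _ _ _ _ (by rw [rep_length]; omega)]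
  rw [rep, getD_replicate' hj]

lemma zpt_false (c : ℕ) (a : ℕ → Bool) (r : ℕ) {j : ℕ} (hj : j < if a r then 2 else 1) :
    zpt c a (base c a r + c + j) = false := by
  have hlen : base c a r + c + j < (core c (glist a (r+1))).length := by
    have := base_succ c a r
    rw [core_len]
    have hb : base c a (r+1) = (FMw c (glist a (r+1))).length := rfl
    cases h : a r <;> simp [h] at this hj <;> omega
  rw [zpt_eq c a hlen, core_split]
  rw [List.getD_append_right _ _ _ _ (by rw [show (FMw c (glist a r)).length = base c a r from rfl]; omega)]
  rw [show base c a r + c + j - (FMw c (glist a r)).length = c + j from by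
    rw [show (FMw c (glist a r)).length = base c a r from rfl]; omega]
  rw [List.getD_append_right _ _ _ _ (by rw [rep_length]; omega)]
  rw [show c + j - (rep c).length = j from by rw [rep_length]; omega]
  rw [List.getD_append _ _ _ _ (by rw [gapL_len]; omega)]
  rw [gapL, getD_replicate' (by omega)]

/-! ### Recurrence of key words in `XX s` -/

lemma piece_decomp (s : ℕ → Bool) (n : ℕ) :
    piece s n = [false] ++ (core (cval s (trip n).2.1) (gdec (trip n).2.2)
      ++ List.replicate (n+3) false) := rfl

lemma recurs_core (s : ℕ → Bool) (k : ℕ) (g : List Bool) :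
    Recurs (XX s) (core (cval s k) g) := by
  intro N
  obtain ⟨n, hNn, hk, hg⟩ := exists_piece_index k g N
  have h1 : occursAt ([false] ++ (core (cval s k) g ++ List.replicate (n+3) false))
      (XX s) (startPos s n) := by
    rw [← hk, ← hg, ← piece_decomp]
    exact occursAt_piece s n
  have h2 := occursAt_left (occursAt_right h1)
  refine ⟨startPos s n + 1, ?_, by simpa using h2⟩
  have := startPos_ge s n
  omega

lemma recurs_zeros (s : ℕ → Bool) (m : ℕ) :
    Recurs (XX s) (List.replicate m false) := by
  intro N
  set n := N + m
  have h1 : occursAt ([false] ++ (core (cval s (trip n).2.1) (gdec (trip n).2.2)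
      ++ List.replicate (n+3) false)) (XX s) (startPos s n) := by
    rw [← piece_decomp]; exact occursAt_piece s n
  have h2 := occursAt_right (occursAt_right h1)
  have hpre : List.replicate m false <+: List.replicate (n+3) false :=
    ⟨List.replicate (n+3-m) false, by rw [← List.replicate_add]; congr 1; omega⟩
  refine ⟨_, ?_, occursAt_prefix h2 hpre⟩
  have := startPos_ge s n
  omega

lemma rep_decomp (c : ℕ) (hc : 1 ≤ c) : rep c = List.replicate (c-1) true ++ [true] := by
  rw [rep, show c = (c-1) + 1 by omega, List.replicate_succ']
  congr 1 <;> omega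

lemma recurs_one_zeros (s : ℕ → Bool) (m : ℕ) :
    Recurs (XX s) (true :: List.replicate m false) := by
  intro N
  set n := N + m with hn
  set c := cval s (trip n).2.1 with hcdef
  have hc : 1 ≤ c := le_trans (by norm_num) (cval_ge s _)
  have h1 : occursAt ([false] ++ ((FMw c (gdec (trip n).2.2) ++ List.replicate (c-1) true)
      ++ ([true] ++ List.replicate (n+3) false))) (XX s) (startPos s n) := by
    have : [false] ++ ((FMw c (gdec (trip n).2.2) ++ List.replicate (c-1) true)
        ++ ([true] ++ List.replicate (n+3) false)) = piece s n := by
      rw [piece_decomp, ← hcdef, core, rep_decomp c hc]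
      simp [List.append_assoc]
    rw [this]
    exact occursAt_piece s n
  have h2 := occursAt_right (occursAt_right h1)
  have hpre : true :: List.replicate m false <+: [true] ++ List.replicate (n+3) false := by
    refine ⟨List.replicate (n+3-m) false, ?_⟩
    show true :: (List.replicate m false ++ List.replicate (n+3-m) false)
        = true :: List.replicate (n+3) false
    rw [← List.replicate_add, show m + (n+3-m) = n+3 from by omega]
  refine ⟨_, ?_, occursAt_prefix h2 hpre⟩
  have := startPos_ge s n
  simp only [List.length_cons, List.length_nil, List.length_append, List.length_replicate]
  omega

/-! ### Membership and exclusion -/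

lemma zpt_mem (s : ℕ → Bool) (k : ℕ) (a : ℕ → Bool) :
    zpt (cval s k) a ∈ omegaLimitShift (XX s) := by
  apply mem_omega_of_forall_recurs
  intro m
  refine ⟨core (cval s k) (glist a m), ?_, ?_, recurs_core s k (glist a m)⟩
  · rw [core_len]
    have h1 := base_ge (cval s k) a m
    have : base (cval s k) a m = (FMw (cval s k) (glist a m)).length := rfl
    omega
  · intro j hj
    rw [zpt_eq (cval s k) a (n := m) (by
      rw [core_len]
      have h1 := base_ge (cval s k) a m
      have : base (cval s k) a m = (FMw (cval s k) (glist a m)).length := rfl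
      omega)]

lemma zero_mem (s : ℕ → Bool) : (fun _ => false) ∈ omegaLimitShift (XX s) := by
  apply mem_omega_of_forall_recurs
  intro m
  refine ⟨List.replicate m false, by simp, ?_, recurs_zeros s m⟩
  intro j hj
  rw [getD_replicate' hj]

lemma onezero_mem (s : ℕ → Bool) :
    (fun j => decide (j = 0)) ∈ omegaLimitShift (XX s) := by
  apply mem_omega_of_forall_recurs
  intro m
  refine ⟨true :: List.replicate m false, by simp, ?_, recurs_one_zeros s m⟩
  intro j hj
  cases j with
  | zero => simp
  | succ j => rw [List.getD_cons_succ, getD_replicate' (by omega)]; simp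

lemma onezero_nonperiodic :
    ¬ ∃ m : ℕ, 1 ≤ m ∧ shiftMap^[m] (fun j => decide (j = 0)) = (fun j => decide (j = 0)) := by
  rintro ⟨m, hm, hp⟩
  have := congrFun hp 0
  rw [shift_iter] at this
  simp at this
  omega

lemma zpt_not_mem (t : ℕ → Bool) {c : ℕ} (hc : 4 ≤ c) (hk : ∀ j, c ≠ cval t j) (a : ℕ → Bool) :
    zpt c a ∉ omegaLimitShift (XX t) := by
  intro hmem
  rw [mem_omega_iff] at hmem
  set γ := if a 0 then 2 else 1 with hγ
  have hγ1 : 1 ≤ γ ∧ γ ≤ 2 := by rw [hγ]; cases h0 : a 0 <;> simp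
  obtain ⟨i, _, hagree⟩ := hmem (2*c + γ + 1) 0
  have hb0 : base c a 0 = 0 := base_zero c a
  have hb1 : base c a 1 = c + γ := by rw [base_succ, hb0, ← hγ]; omega
  apply no_bad_run t c (by omega) hk (i + (c + γ - 1))
  refine ⟨?_, ?_, ?_⟩
  · have hv := zpt_false c a 0 (j := γ - 1) (by omega)
    rw [hb0] at hv
    have := hagree (c + γ - 1) (by omega)
    rw [show 0 + c + (γ-1) = c + γ - 1 from by omega] at hv
    rw [this, hv]
  · intro j hj
    have hv := zpt_true c a 1 (j := j) hj
    rw [hb1] at hv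
    have := hagree (c + γ + j) (by omega)
    rw [show i + (c + γ - 1) + 1 + j = i + (c + γ + j) from by omega, this, hv]
  · have hv := zpt_false c a 1 (j := 0) (by cases a 1 <;> simp)
    rw [hb1] at hv
    have := hagree (c + γ + c) (by omega)
    rw [show i + (c + γ - 1) + 1 + c = i + (c + γ + c) from by omega, this]
    rw [show c + γ + c + 0 = c + γ + c from by omega] at hv
    exact hv

lemma zpt_inj_aux {c : ℕ} (hc : 1 ≤ c) {a a' : ℕ → Bool} (r : ℕ)
    (hbase : glist a r = glist a' r) (har : a r = false) (ha'r : a' r = true) :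
    zpt c a ≠ zpt c a' := by
  intro h
  have hbb : base c a r = base c a' r := by rw [base, base, hbase]
  have h1 : zpt c a (base c a r + c + 1) = true := by
    have hbs : base c a (r+1) = base c a r + c + 1 := by rw [base_succ, har]; simp
    have := zpt_true c a (r+1) (j := 0) (by omega)
    rwa [hbs, Nat.add_zero] at this
  have h2 : zpt c a' (base c a r + c + 1) = false := by
    have := zpt_false c a' r (j := 1) (by rw [ha'r]; simp)
    rwa [hbb]
  rw [h, h2] at h1
  exact Bool.noConfusion h1

lemma zpt_inj {c : ℕ} (hc : 1 ≤ c) {a a' : ℕ → Bool} (h : zpt c a = zpt c a') : a = a' := by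
  by_contra hne
  obtain ⟨r0, hr0⟩ := Function.ne_iff.1 hne
  have hex : ∃ r, a r ≠ a' r := ⟨r0, hr0⟩
  classical
  set r := Nat.find hex with hr
  have hrd : a r ≠ a' r := Nat.find_spec hex
  have hmin : ∀ q < r, a q = a' q := fun q hq => by
    by_contra hq'
    exact absurd (Nat.find_min hex hq) (by simp [hq'])
  have hbase : glist a r = glist a' r := by
    apply List.map_congr_left
    intro q hq
    exact hmin q (List.mem_range.1 hq)
  cases har : a r with
  | false =>
      exact zpt_inj_aux hc r hbase har (by revert hrd; rw [har]; cases a' r <;> simp) h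
  | true =>
      exact zpt_inj_aux hc r hbase.symm
        (by revert hrd; rw [har]; cases a' r <;> simp) har h.symm

/-! ### Prepending a finite word -/

def prepend (w : List Bool) (x : ℕ → Bool) : ℕ → Bool :=
  fun j => if j < w.length then w.getD j false else x (j - w.length)

lemma omega_prepend (w : List Bool) (x : ℕ → Bool) :
    omegaLimitShift (prepend w x) = omegaLimitShift x := by
  ext y
  rw [mem_omega_iff, mem_omega_iff]
  constructor
  · intro h m n
    obtain ⟨i, hi, hv⟩ := h m (n + w.length)
    refine ⟨i - w.length, by omega, fun j hj => ?_⟩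
    have hvj := hv j hj
    simp only [prepend] at hvj
    rw [if_neg (by omega)] at hvj
    rwa [show i - w.length + j = i + j - w.length from by omega]
  · intro h m n
    obtain ⟨i, hi, hv⟩ := h m n
    refine ⟨i + w.length, by omega, fun j hj => ?_⟩
    show (if i + w.length + j < w.length then w.getD (i + w.length + j) false
      else x (i + w.length + j - w.length)) = y j
    rw [if_neg (by omega), show i + w.length + j - w.length = i + j from by omega]
    exact hv j hj

/-! ### Uncountability -/

lemma uncountable_aux {A : Set (ℕ → Bool)} (f : (ℕ → Bool) → (ℕ → Bool))
    (hinj : ∀ a a', f a = f a' → a = a') (hsub : ∀ a, f a ∈ A) : ¬ A.Countable := by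
  classical
  intro hA
  have hc : Countable ↥A := hA.to_subtype
  obtain ⟨g, hg⟩ := (countable_iff_exists_injective ↥A).1 hc
  set F : Set ℕ → ℕ := fun S => g ⟨f (fun n => decide (n ∈ S)), hsub _⟩ with hF
  apply Function.cantor_injective F
  intro S S' hSS
  have h1 := hg hSS
  have h2 : f (fun n => decide (n ∈ S)) = f (fun n => decide (n ∈ S')) :=
    congrArg Subtype.val h1
  have h3 := hinj _ _ h2
  ext n
  exact decide_eq_decide.1 (congrFun h3 n)

lemma cval_notin {s t : ℕ → Bool} {k : ℕ} (hk : s k ≠ t k) : ∀ j, cval s k ≠ cval t j := by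
  intro j h
  obtain ⟨hkj, hiv⟩ := cval_inj h
  exact hk (hiv k le_rfl)

lemma key_pair {s t : ℕ → Bool} (hst : ∃ k, s k ≠ t k) :
    ¬ (omegaLimitShift (XX s) \ omegaLimitShift (XX t)).Countable := by
  obtain ⟨k, hk⟩ := hst
  apply uncountable_aux (fun a => zpt (cval s k) a)
  · intro a a' h
    exact zpt_inj (le_trans (by norm_num) (cval_ge s k)) h
  · intro a
    exact ⟨zpt_mem s k a, zpt_not_mem t (cval_ge s k) (cval_notin hk) a⟩

end OmegaChaos

theorem full_shift_dense_omega_chaos :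
    ∀ U : Set (ℕ → Bool), IsOpen U → U.Nonempty →
      ∃ A ⊆ U, ¬ A.Countable ∧ OmegaScrambled A := by
  intro U hU hne
  obtain ⟨y0, hy0⟩ := hne
  obtain ⟨m0, hm0⟩ := OmegaChaos.exists_cylinder_subset (hU.mem_nhds hy0)
  set w : List Bool := List.ofFn (fun j : Fin m0 => y0 j) with hw
  have hwlen : w.length = m0 := by simp [hw]
  have hwval : ∀ j (hj : j < m0), w.getD j false = y0 j := by
    intro j hj
    rw [List.getD_eq_getElem _ _ (by rw [hwlen]; exact hj)]
    simp [hw]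
  set F : (ℕ → Bool) → (ℕ → Bool) := fun s => OmegaChaos.prepend w (OmegaChaos.XX s) with hF
  have homega : ∀ s, omegaLimitShift (F s) = omegaLimitShift (OmegaChaos.XX s) :=
    fun s => OmegaChaos.omega_prepend w (OmegaChaos.XX s)
  have hdiff : ∀ s t : ℕ → Bool, s ≠ t →
      ¬ (omegaLimitShift (F s) \ omegaLimitShift (F t)).Countable := by
    intro s t hst
    rw [homega, homega]
    exact OmegaChaos.key_pair (Function.ne_iff.1 hst)
  have hFinj : ∀ s t, F s = F t → s = t := by
    intro s t h
    by_contra hst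
    have h2 := hdiff s t hst
    rw [h] at h2
    exact h2 (by simp)
  refine ⟨Set.range F, ?_, ?_, ?_⟩
  · rintro z ⟨s, rfl⟩
    apply hm0
    intro j hj
    show (if j < w.length then w.getD j false else OmegaChaos.XX s (j - w.length)) = y0 j
    rw [if_pos (by omega), hwval j hj]
  · exact OmegaChaos.uncountable_aux F hFinj (fun s => ⟨s, rfl⟩)
  · rintro x ⟨s, rfl⟩ y ⟨t, rfl⟩ hxy
    have hst : s ≠ t := fun h => hxy (by rw [h])
    refine ⟨⟨fun _ => false, ?_, ?_⟩, hdiff s t hst, ?_⟩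
    · rw [homega]; exact OmegaChaos.zero_mem s
    · rw [homega]; exact OmegaChaos.zero_mem t
    · exact ⟨fun j => decide (j = 0), by rw [homega]; exact OmegaChaos.onezero_mem s,
        OmegaChaos.onezero_nonperiodic⟩
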